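/- For every natural number n ≥ 1, the value n*(n+1)/2 - 1 is the greatest value of qcost over all lists l : List ℤ of length n: every such list satisfies qcost l ≤ n*(n+1)/2 - 1, and there exists a list of length n (e.g. the strictly decreasing list [n, n-1, …, 1]) attaining this value. -/

import Mathlib

/-- Cost of the paper's simple QuickSort: each call on a list of length `N ≥ 2`
costs `N`, plus the cost of recursive calls on the strict-left and strict-right
partitions of the tail around the pivot `l.head!`. -/
def qcost (l : List ℤ) : ℕ :=
  if _h : l.length ≤ 1 then 0
  else
    l.length + qcost (l.tail.filter (· < l.head!)) + qcost (l.tail.filter (· > l.head!))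
termination_by l.length
decreasing_by
  · calc (l.tail.filter (· < l.head!)).length ≤ l.tail.length := List.length_filter_le _ _
      _ < l.length := by rw [List.length_tail]; omega
  · calc (l.tail.filter (· > l.head!)).length ≤ l.tail.length := List.length_filter_le _ _
      _ < l.length := by rw [List.length_tail]; omega

lemma key_arith (a c n : ℕ) (h : a + c + 1 ≤ n) (hn : 2 ≤ n) :
    n + (a*(a+1)/2 - 1) + (c*(c+1)/2 - 1) ≤ n*(n+1)/2 - 1 := by
  have hA : 2 * (a*(a+1)/2) = a*(a+1) :=
    Nat.mul_div_cancel' ((Nat.even_mul_succ_self a).two_dvd)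
  have hC : 2 * (c*(c+1)/2) = c*(c+1) :=
    Nat.mul_div_cancel' ((Nat.even_mul_succ_self c).two_dvd)
  have hN : 2 * (n*(n+1)/2) = n*(n+1) :=
    Nat.mul_div_cancel' ((Nat.even_mul_succ_self n).two_dvd)
  have h4 : a*(a+1) + c*(c+1) + 2*n ≤ n*(n+1) := by nlinarith
  have h5 : 2*n + 2 ≤ n*(n+1) := by nlinarith
  have ha : a*(a+1) = 0 ∨ 2 ≤ a*(a+1) := by
    rcases Nat.eq_zero_or_pos a with h | h
    · left; simp [h]
    · right; nlinarith
  have hc : c*(c+1) = 0 ∨ 2 ≤ c*(c+1) := by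
    rcases Nat.eq_zero_or_pos c with h | h
    · left; simp [h]
    · right; nlinarith
  set p := a*(a+1); set q := c*(c+1); set r := n*(n+1)
  omega

lemma filter_split_len (h : ℤ) : ∀ t : List ℤ,
    (t.filter (· < h)).length + (t.filter (· > h)).length ≤ t.length := by
  intro t
  induction t with
  | nil => simp
  | cons x xs ih =>
    simp only [gt_iff_lt] at ih ⊢
    by_cases h1 : x < h <;> by_cases h2 : h < x <;>
      simp [List.filter_cons, h1, h2] <;> omega

lemma qcost_le : ∀ n : ℕ, ∀ l : List ℤ, l.length ≤ n →
    qcost l ≤ l.length * (l.length + 1) / 2 - 1 := by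
  intro n
  induction n with
  | zero => intro l hl; rw [qcost]; simp at hl; simp [hl]
  | succ n ih =>
    intro l hl
    rw [qcost]
    split
    · exact Nat.zero_le _
    · rename_i hlen
      push_neg at hlen
      have ht : l.tail.length = l.length - 1 := List.length_tail (l := l)
      have hL : (l.tail.filter (· < l.head!)).length ≤ n := by
        calc _ ≤ l.tail.length := List.length_filter_le _ _
          _ ≤ n := by omega
      have hR : (l.tail.filter (· > l.head!)).length ≤ n := by
        calc _ ≤ l.tail.length := List.length_filter_le _ _
          _ ≤ n := by omega
      have hsum := filter_split_len l.head! l.tail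
      have h1 := ih _ hL
      have h2 := ih _ hR
      have := key_arith (l.tail.filter (· < l.head!)).length
        (l.tail.filter (· > l.head!)).length l.length (by omega) (by omega)
      omega

/-- [n, n-1, ..., 1] -/
def dec : ℕ → List ℤ
  | 0 => []
  | n + 1 => ((n : ℤ) + 1) :: dec n

lemma dec_length : ∀ n, (dec n).length = n := by
  intro n; induction n with
  | zero => rfl
  | succ n ih => simp [dec, ih]

lemma dec_mem : ∀ n, ∀ x ∈ dec n, x ≤ (n : ℤ) := by
  intro n
  induction n with
  | zero => simp [dec]
  | succ n ih =>
    intro x hx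
    simp only [dec, List.mem_cons] at hx
    rcases hx with h | h
    · omega
    · have := ih x h; push_cast; push_cast at this; omega

lemma qcost_dec : ∀ n : ℕ, 1 ≤ n → qcost (dec n) = n * (n + 1) / 2 - 1 := by
  intro n
  induction n with
  | zero => omega
  | succ n ih =>
    intro _
    rcases Nat.eq_zero_or_pos n with h0 | h1
    · subst h0; rw [qcost]; simp [dec]
    · rw [qcost]
      have hlen : (dec (n+1)).length = n + 1 := dec_length _
      have hne : ¬ (dec (n+1)).length ≤ 1 := by omega
      rw [dif_neg hne]
      have hhead : (dec (n+1)).head! = (n : ℤ) + 1 := by simp [dec]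
      have htail : (dec (n+1)).tail = dec n := by simp [dec]
      have hfl : ((dec (n+1)).tail.filter (· < (dec (n+1)).head!)) = dec n := by
        rw [htail, hhead]
        apply List.filter_eq_self.mpr
        intro x hx
        have := dec_mem n x hx
        simp; omega
      have hfr : ((dec (n+1)).tail.filter (· > (dec (n+1)).head!)) = [] := by
        rw [htail, hhead]
        apply List.filter_eq_nil_iff.mpr
        intro x hx
        have := dec_mem n x hx
        simp; omega
      rw [hfl, hfr, hlen, ih h1]
      have : qcost [] = 0 := by rw [qcost]; simp
      rw [this]
      have hstep : (n+1)*(n+1+1)/2 = n*(n+1)/2 + (n+1) := by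
        rw [show (n+1)*(n+1+1) = n*(n+1) + (n+1)*2 by ring,
          Nat.add_mul_div_right _ _ (by norm_num : (0:ℕ) < 2)]
      have hT1 : 1 ≤ n*(n+1)/2 := by
        rw [Nat.le_div_iff_mul_le (by norm_num : (0:ℕ) < 2)]
        nlinarith
      rw [hstep]
      generalize n*(n+1)/2 = x at hT1 ⊢
      omega

/-- Exact worst-case analysis of simple QuickSort: for `n ≥ 1`, the value
`n*(n+1)/2 - 1` is the greatest cost over all inputs of length `n`, and it
is attained by some input of length `n`. -/
theorem qcost_worst_case (n : ℕ) (hn : 1 ≤ n) :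
    (∀ l : List ℤ, l.length = n → qcost l ≤ n * (n + 1) / 2 - 1) ∧
    (∃ l : List ℤ, l.length = n ∧ qcost l = n * (n + 1) / 2 - 1) := by
  constructor
  · intro l hl
    have := qcost_le n l (le_of_eq hl)
    rwa [hl] at this
  · exact ⟨dec n, dec_length n, qcost_dec n hn⟩
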